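/- Let V : ℝ³ → ℝ be differentiable, with V and x·∇V bounded on ℝ³ and both continuous at the origin, and assume V(0) < 0. Let Q : ℝ³ → ℝ be differentiable with Q, ∇Q ∈ L²(ℝ³), Q ∈ L⁴(ℝ³), M(Q) > 0, G(Q) > 0 and 2H₀(Q) = 3G(Q). Then there exist a constant C ∈ (0, −V(0)) and μ* > 0 such that for every μ ∈ (0, μ*] there exists a function φ : ℝ³ → ℂ, differentiable with φ, ∇φ ∈ L²(ℝ³) and φ ∈ L⁴(ℝ³), satisfying M(φ) ≤ μ, K_{V,2}(φ) ≤ 0, G(φ) ≥ 1 and I_V(φ) ≤ μ^{−1}·E₀(Q)·M(Q) − C·μ. -/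

import Mathlib

open MeasureTheory
set_option maxHeartbeats 2000000

noncomputable section

abbrev R3 := EuclideanSpace ℝ (Fin 3)

/-- Mass: `M(φ) = (1/2) ∫ |φ|²`. -/
def Mfun {E : Type*} [NormedAddCommGroup E] (φ : R3 → E) : ℝ :=
  (1 / 2) * ∫ x, ‖φ x‖ ^ 2

/-- Kinetic energy: `H₀(φ) = (1/2) ∫ |∇φ|²`. -/
def H0 {E : Type*} [NormedAddCommGroup E] [NormedSpace ℝ E] (φ : R3 → E) : ℝ :=
  (1 / 2) * ∫ x, ‖fderiv ℝ φ x‖ ^ 2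

/-- Quartic functional: `G(φ) = (1/4) ∫ |φ|⁴`. -/
def Gfun {E : Type*} [NormedAddCommGroup E] (φ : R3 → E) : ℝ :=
  (1 / 4) * ∫ x, ‖φ x‖ ^ 4

/-- Free energy: `E₀(φ) = H₀(φ) - G(φ)`. -/
def E0 {E : Type*} [NormedAddCommGroup E] [NormedSpace ℝ E] (φ : R3 → E) : ℝ :=
  H0 φ - Gfun φ

/-- The radial derivative of the potential: `(x·∇V)(x) = ⟨x, ∇V(x)⟩ = (DV(x))(x)`. -/
def xdV (V : R3 → ℝ) (x : R3) : ℝ := fderiv ℝ V x x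

/-- Free virial functional: `K₀,₂(φ) = 2H₀(φ) - 3G(φ)`. -/
def K02 {E : Type*} [NormedAddCommGroup E] [NormedSpace ℝ E] (φ : R3 → E) : ℝ :=
  2 * H0 φ - 3 * Gfun φ

/-- Virial functional with potential:
`K_{V,2}(φ) = 2H₀(φ) - 3G(φ) - (1/2) ∫ (x·∇V) |φ|²`. -/
def K2 {E : Type*} [NormedAddCommGroup E] [NormedSpace ℝ E]
    (V : R3 → ℝ) (φ : R3 → E) : ℝ :=
  2 * H0 φ - 3 * Gfun φ - (1 / 2) * ∫ x, xdV V x * ‖φ x‖ ^ 2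

/-- `I_V(φ) = (1/2)G(φ) + (1/4) ∫ ((x·∇V) + 2V) |φ|²`. -/
def IV {E : Type*} [NormedAddCommGroup E] (V : R3 → ℝ) (φ : R3 → E) : ℝ :=
  (1 / 2) * Gfun φ + (1 / 4) * ∫ x, (xdV V x + 2 * V x) * ‖φ x‖ ^ 2

/-- Energy with potential: `E_V(φ) = H₀(φ) + (1/2)∫ V|φ|² - G(φ)`. -/
def EV {E : Type*} [NormedAddCommGroup E] [NormedSpace ℝ E]
    (V : R3 → ℝ) (φ : R3 → E) : ℝ :=
  H0 φ + (1 / 2) * ∫ x, V x * ‖φ x‖ ^ 2 - Gfun φ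

section Helpers

open Filter Topology

lemma norm_ofRealCLM_comp (L : R3 →L[ℝ] ℝ) : ‖Complex.ofRealCLM.comp L‖ = ‖L‖ := by
  apply le_antisymm
  · apply ContinuousLinearMap.opNorm_le_bound _ (norm_nonneg L)
    intro v
    simp [Complex.norm_real]
    exact L.le_opNorm v
  · apply ContinuousLinearMap.opNorm_le_bound _ (norm_nonneg _)
    intro v
    have := (Complex.ofRealCLM.comp L).le_opNorm v
    simpa [Complex.norm_real] using this

lemma scale_int (l : ℝ) (hl : 0 ≤ l) (f : R3 → ℝ) :
    ∫ x, f (l • x) = (l ^ 3)⁻¹ * ∫ x, f x := by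
  have := MeasureTheory.Measure.integral_comp_smul_of_nonneg (μ := (volume : Measure R3)) f l
    (hR := hl)
  rw [this, finrank_euclideanSpace_fin, smul_eq_mul]

lemma norm_phi (Q : R3 → ℝ) (a l : ℝ) (ha : 0 ≤ a) (n : ℕ) (x : R3) :
    ‖((a * Q (l • x) : ℝ) : ℂ)‖ ^ n = a ^ n * ‖Q (l • x)‖ ^ n := by
  rw [Complex.norm_real, Real.norm_eq_abs, abs_mul, abs_of_nonneg ha, mul_pow, Real.norm_eq_abs]

lemma int_phi_pow (Q : R3 → ℝ) (a l : ℝ) (ha : 0 ≤ a) (hl : 0 ≤ l) (n : ℕ) :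
    ∫ x, ‖((a * Q (l • x) : ℝ) : ℂ)‖ ^ n = a ^ n * ((l ^ 3)⁻¹ * ∫ x, ‖Q x‖ ^ n) := by
  simp_rw [norm_phi Q a l ha n]
  rw [integral_const_mul, scale_int l hl (fun y => ‖Q y‖ ^ n)]

lemma intW_phi (Q : R3 → ℝ) (a l : ℝ) (ha : 0 ≤ a) (hl : 0 < l) (W : R3 → ℝ) :
    ∫ x, W x * ‖((a * Q (l • x) : ℝ) : ℂ)‖ ^ 2
      = a ^ 2 * ((l ^ 3)⁻¹ * ∫ y, W (l⁻¹ • y) * ‖Q y‖ ^ 2) := by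
  have key : ∀ x : R3, W x * ‖((a * Q (l • x) : ℝ) : ℂ)‖ ^ 2
      = a ^ 2 * ((fun y => W (l⁻¹ • y) * ‖Q y‖ ^ 2) (l • x)) := by
    intro x
    simp only [norm_phi Q a l ha 2, smul_smul, inv_mul_cancel₀ hl.ne', one_smul]
    ring
  simp_rw [key]
  rw [integral_const_mul, scale_int l hl.le (fun y => W (l⁻¹ • y) * ‖Q y‖ ^ 2)]

lemma fderiv_scaled (Q : R3 → ℝ) (hQ : Differentiable ℝ Q) (a l : ℝ) (x : R3) :
    HasFDerivAt (fun x : R3 => ((a * Q (l • x) : ℝ) : ℂ))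
      (Complex.ofRealCLM.comp ((a * l) • fderiv ℝ Q (l • x))) x := by
  have h0 : HasFDerivAt (fun x : R3 => l • x) (l • ContinuousLinearMap.id ℝ R3) x :=
    (l • ContinuousLinearMap.id ℝ R3).hasFDerivAt
  have h1 : HasFDerivAt (fun x : R3 => Q (l • x))
      ((fderiv ℝ Q (l • x)).comp (l • ContinuousLinearMap.id ℝ R3)) x :=
    ((hQ (l • x)).hasFDerivAt).comp x h0
  have h2 := h1.const_mul a
  have h3 := Complex.ofRealCLM.hasFDerivAt.comp x h2
  refine h3.congr_fderiv ?_
  ext v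
  simp [mul_comm, mul_assoc, mul_left_comm]

lemma norm_fderiv_phi (Q : R3 → ℝ) (hQ : Differentiable ℝ Q) (a l : ℝ)
    (ha : 0 ≤ a) (hl : 0 ≤ l) (x : R3) :
    ‖fderiv ℝ (fun x : R3 => ((a * Q (l • x) : ℝ) : ℂ)) x‖ ^ 2
      = (a * l) ^ 2 * ‖fderiv ℝ Q (l • x)‖ ^ 2 := by
  rw [(fderiv_scaled Q hQ a l x).fderiv, norm_ofRealCLM_comp]
  have h := norm_smul (a * l) (fderiv ℝ Q (l • x))
  rw [Real.norm_eq_abs, abs_of_nonneg (mul_nonneg ha hl)] at h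
  rw [h, mul_pow]

lemma int_fderiv_phi (Q : R3 → ℝ) (hQ : Differentiable ℝ Q) (a l : ℝ)
    (ha : 0 ≤ a) (hl : 0 ≤ l) :
    ∫ x, ‖fderiv ℝ (fun x : R3 => ((a * Q (l • x) : ℝ) : ℂ)) x‖ ^ 2
      = (a * l) ^ 2 * ((l ^ 3)⁻¹ * ∫ x, ‖fderiv ℝ Q x‖ ^ 2) := by
  simp_rw [norm_fderiv_phi Q hQ a l ha hl]
  rw [integral_const_mul]
  congr 1
  exact scale_int l hl (fun y => ‖fderiv ℝ Q y‖ ^ 2)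

lemma xdV_meas (V : R3 → ℝ) : Measurable (xdV V) := by
  have h1 : Measurable (fderiv ℝ V) := measurable_fderiv ℝ V
  have h2 : Continuous fun p : (R3 →L[ℝ] ℝ) × R3 => p.1 p.2 :=
    isBoundedBilinearMap_apply.continuous
  exact h2.measurable.comp (h1.prodMk measurable_id)

lemma tendsto_intW (Q : R3 → ℝ) (hQc : Continuous Q)
    (hQ2 : Integrable (fun x => ‖Q x‖ ^ 2))
    (W : R3 → ℝ) (hWm : Measurable W) (hWc : ContinuousAt W 0)
    (Cw : ℝ) (hWbd : ∀ x, |W x| ≤ Cw)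
    (g : ℝ → ℝ) (hg : Tendsto g (𝓝[>] (0:ℝ)) atTop) :
    Tendsto (fun μ => ∫ y, W ((g μ)⁻¹ • y) * ‖Q y‖ ^ 2) (𝓝[>] (0:ℝ))
      (𝓝 (W 0 * ∫ y, ‖Q y‖ ^ 2)) := by
  have hQm : Measurable fun y : R3 => ‖Q y‖ ^ 2 := ((hQc.norm).pow 2).measurable
  rw [← integral_const_mul]
  apply tendsto_integral_filter_of_dominated_convergence (fun y => Cw * ‖Q y‖ ^ 2)
  · filter_upwards with μ
    exact ((hWm.comp (measurable_const_smul (g μ)⁻¹)).mul hQm).aestronglyMeasurable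
  · filter_upwards with μ
    filter_upwards with y
    rw [norm_mul]
    have h1 : ‖W ((g μ)⁻¹ • y)‖ ≤ Cw := by
      rw [Real.norm_eq_abs]; exact hWbd _
    have h2 : ‖‖Q y‖ ^ 2‖ = ‖Q y‖ ^ 2 := by
      rw [Real.norm_eq_abs, abs_of_nonneg (by positivity)]
    rw [h2]
    exact mul_le_mul_of_nonneg_right h1 (by positivity)
  · exact hQ2.const_mul Cw
  · filter_upwards with y
    have h1 : Tendsto (fun μ => (g μ)⁻¹) (𝓝[>] (0:ℝ)) (𝓝 0) := hg.inv_tendsto_atTop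
    have h2 : Tendsto (fun μ => (g μ)⁻¹ • y) (𝓝[>] (0:ℝ)) (𝓝 (0 : R3)) := by
      have := h1.smul_const y
      rwa [zero_smul] at this
    exact (hWc.tendsto.comp h2).mul_const _


lemma Mfun_phi (Q : R3 → ℝ) (a l : ℝ) (ha : 0 ≤ a) (hl : 0 ≤ l) :
    Mfun (fun x : R3 => ((a * Q (l • x) : ℝ) : ℂ))
      = (1 / 2) * (a ^ 2 * ((l ^ 3)⁻¹ * ∫ x, ‖Q x‖ ^ 2)) := by
  unfold Mfun
  rw [int_phi_pow Q a l ha hl 2]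

lemma Gfun_phi (Q : R3 → ℝ) (a l : ℝ) (ha : 0 ≤ a) (hl : 0 ≤ l) :
    Gfun (fun x : R3 => ((a * Q (l • x) : ℝ) : ℂ))
      = (1 / 4) * (a ^ 4 * ((l ^ 3)⁻¹ * ∫ x, ‖Q x‖ ^ 4)) := by
  unfold Gfun
  rw [int_phi_pow Q a l ha hl 4]

lemma H0_phi (Q : R3 → ℝ) (hQ : Differentiable ℝ Q) (a l : ℝ) (ha : 0 ≤ a) (hl : 0 ≤ l) :
    H0 (fun x : R3 => ((a * Q (l • x) : ℝ) : ℂ))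
      = (1 / 2) * ((a * l) ^ 2 * ((l ^ 3)⁻¹ * ∫ x, ‖fderiv ℝ Q x‖ ^ 2)) := by
  unfold H0
  rw [int_fderiv_phi Q hQ a l ha hl]

lemma K2_phi (V : R3 → ℝ) (Q : R3 → ℝ) (hQ : Differentiable ℝ Q) (a l : ℝ)
    (ha : 0 ≤ a) (hl : 0 < l) :
    K2 V (fun x : R3 => ((a * Q (l • x) : ℝ) : ℂ))
      = 2 * H0 (fun x : R3 => ((a * Q (l • x) : ℝ) : ℂ))
        - 3 * Gfun (fun x : R3 => ((a * Q (l • x) : ℝ) : ℂ))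
        - (1 / 2) * (a ^ 2 * ((l ^ 3)⁻¹ * ∫ y, xdV V (l⁻¹ • y) * ‖Q y‖ ^ 2)) := by
  unfold K2
  rw [intW_phi Q a l ha hl (xdV V)]

lemma IV_phi (V : R3 → ℝ) (Q : R3 → ℝ) (a l : ℝ) (ha : 0 ≤ a) (hl : 0 < l) :
    IV V (fun x : R3 => ((a * Q (l • x) : ℝ) : ℂ))
      = (1 / 2) * Gfun (fun x : R3 => ((a * Q (l • x) : ℝ) : ℂ))
        + (1 / 4) * (a ^ 2 * ((l ^ 3)⁻¹ *
            ∫ y, (xdV V (l⁻¹ • y) + 2 * V (l⁻¹ • y)) * ‖Q y‖ ^ 2)) := by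
  unfold IV
  have h := intW_phi Q a l ha hl (fun x => xdV V x + 2 * V x)
  rw [h]

end Helpers

open Filter Topology

/-- Strict upper bound for the modified excited-state energy level when `V(0) < 0`:
there are `C ∈ (0, -V(0))` and `μ* > 0` such that for all `0 < μ ≤ μ*` there is an
admissible competitor `φ` with `M(φ) ≤ μ`, `K_{V,2}(φ) ≤ 0`, `G(φ) ≥ 1` and
`I_V(φ) ≤ μ⁻¹ E₀(Q) M(Q) - C μ`. -/
theorem stmt3 (V : R3 → ℝ) (hV : Differentiable ℝ V)
    (hVbd : ∃ C, ∀ x, |V x| ≤ C) (hxdVbd : ∃ C, ∀ x, |xdV V x| ≤ C)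
    (hVc : ContinuousAt V 0) (hxdVc : ContinuousAt (xdV V) 0)
    (hV0 : V 0 < 0)
    (Q : R3 → ℝ) (hQ : Differentiable ℝ Q)
    (hQ2 : Integrable (fun x => ‖Q x‖ ^ 2))
    (hQg : Integrable (fun x => ‖fderiv ℝ Q x‖ ^ 2))
    (hQ4 : Integrable (fun x => ‖Q x‖ ^ 4))
    (hMQ : 0 < Mfun Q) (hGQ : 0 < Gfun Q) (hPoh : 2 * H0 Q = 3 * Gfun Q) :
    ∃ C : ℝ, 0 < C ∧ C < -V 0 ∧ ∃ μstar > (0 : ℝ), ∀ μ ∈ Set.Ioc (0 : ℝ) μstar,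
      ∃ φ : R3 → ℂ,
        Differentiable ℝ φ ∧
        Integrable (fun x => ‖φ x‖ ^ 2) ∧
        Integrable (fun x => ‖fderiv ℝ φ x‖ ^ 2) ∧
        Integrable (fun x => ‖φ x‖ ^ 4) ∧
        Mfun φ ≤ μ ∧ K2 V φ ≤ 0 ∧ 1 ≤ Gfun φ ∧
        IV V φ ≤ μ⁻¹ * (E0 Q * Mfun Q) - C * μ := by
  obtain ⟨CV, hCV⟩ := hVbd
  obtain ⟨C1, hC1⟩ := hxdVbd
  set MQ := Mfun Q with hMQdef
  set GQ := Gfun Q with hGQdef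
  set v0 := -V 0 with hv0def
  clear_value MQ GQ v0
  have hv0 : 0 < v0 := by rw [hv0def]; linarith only [hV0]
  -- basic integrals of Q
  have hIQ2 : ∫ x, ‖Q x‖ ^ 2 = 2 * MQ := by
    have h : MQ = (1 / 2) * ∫ x, ‖Q x‖ ^ 2 := hMQdef
    linarith only [h]
  have hIQ4 : ∫ x, ‖Q x‖ ^ 4 = 4 * GQ := by
    have h : GQ = (1 / 4) * ∫ x, ‖Q x‖ ^ 4 := hGQdef
    linarith only [h]
  have hH0Q : H0 Q = (3 / 2) * GQ := by linarith only [hPoh]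
  have hIQg : ∫ x, ‖fderiv ℝ Q x‖ ^ 2 = 3 * GQ := by
    have h : H0 Q = (1 / 2) * ∫ x, ‖fderiv ℝ Q x‖ ^ 2 := rfl
    linarith only [h, hH0Q]
  have hE0Q : E0 Q = (1 / 2) * GQ := by
    have h : E0 Q = H0 Q - Gfun Q := rfl
    rw [← hGQdef] at h
    linarith only [h, hH0Q]
  -- constants
  set κ := v0 / (100 * (MQ * GQ)) with hκdef
  have hκ0 : 0 < κ := by
    rw [hκdef]
    exact div_pos hv0 (mul_pos (by norm_num) (mul_pos hMQ hGQ))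
  have hκval : 100 * (MQ * GQ) * κ = v0 := by
    rw [hκdef]
    field_simp
  clear_value κ
  -- scaling functions
  set δf : ℝ → ℝ := fun μ => κ * μ ^ 2 with hδfdef
  set lf : ℝ → ℝ := fun μ => (1 + δf μ) ^ 2 * MQ / μ with hlfdef
  clear_value δf lf
  -- lf tends to infinity
  have hlf : Filter.Tendsto lf (𝓝[>] (0:ℝ)) Filter.atTop := by
    have hc : Continuous fun μ : ℝ => (1 + κ * μ ^ 2) ^ 2 * MQ :=
      ((continuous_const.add (continuous_const.mul (continuous_pow 2))).pow 2).mul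
        continuous_const
    have h1 : Filter.Tendsto (fun μ : ℝ => (1 + κ * μ ^ 2) ^ 2 * MQ) (𝓝[>] (0:ℝ))
        (𝓝 ((1 + κ * 0 ^ 2) ^ 2 * MQ)) := (hc.tendsto 0).mono_left nhdsWithin_le_nhds
    have h2 : (1 + κ * (0:ℝ) ^ 2) ^ 2 * MQ = MQ := by ring
    rw [h2] at h1
    have h3 := h1.pos_mul_atTop hMQ tendsto_inv_nhdsGT_zero
    apply h3.congr
    intro μ
    simp only [hlfdef, hδfdef, div_eq_mul_inv]
  -- the potential weight
  set W2 : R3 → ℝ := fun x => xdV V x + 2 * V x with hW2def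
  have hxdV0 : xdV V 0 = 0 := by simp [xdV]
  have hW20 : W2 0 = 2 * V 0 := by simp [hW2def, hxdV0]
  have hW2m : Measurable W2 := (xdV_meas V).add ((hV.continuous.measurable).const_mul 2)
  have hW2c : ContinuousAt W2 0 := hxdVc.add (continuousAt_const.mul hVc)
  have hW2bd : ∀ x, |W2 x| ≤ C1 + 2 * CV := by
    intro x
    calc |W2 x| ≤ |xdV V x| + |2 * V x| := abs_add_le _ _
    _ ≤ C1 + 2 * CV := by
        rw [abs_mul, abs_two]
        linarith only [hCV x, hC1 x]
  -- convergence of the two weighted integrals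
  clear_value W2
  have hJK := tendsto_intW Q hQ.continuous hQ2 (xdV V) (xdV_meas V) hxdVc C1 hC1 lf hlf
  rw [hxdV0, zero_mul] at hJK
  have hJP := tendsto_intW Q hQ.continuous hQ2 W2 hW2m hW2c (C1 + 2 * CV) hW2bd lf hlf
  rw [hW20, hIQ2] at hJP
  -- eventual conditions
  have ec1 : ∀ᶠ μ in 𝓝[>] (0:ℝ), δf μ ≤ 1 / 5 := by
    have hc : Continuous δf := by
      rw [hδfdef]
      exact continuous_const.mul (continuous_pow 2)
    have h1 : Filter.Tendsto δf (𝓝[>] (0:ℝ)) (𝓝 (δf 0)) :=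
      (hc.tendsto 0).mono_left nhdsWithin_le_nhds
    have h2 : δf 0 = 0 := by simp [hδfdef]
    rw [h2] at h1
    exact h1.eventually_le_const (by norm_num)
  have ec2 : ∀ᶠ μ in 𝓝[>] (0:ℝ), μ ≤ MQ * GQ := by
    have h1 : Filter.Tendsto (fun μ : ℝ => μ) (𝓝[>] (0:ℝ)) (𝓝 0) :=
      tendsto_id.mono_left nhdsWithin_le_nhds
    exact h1.eventually_le_const (mul_pos hMQ hGQ)
  have ec3 : ∀ᶠ μ in 𝓝[>] (0:ℝ),
      |∫ y, xdV V ((lf μ)⁻¹ • y) * ‖Q y‖ ^ 2| ≤ 6 * GQ * κ * MQ ^ 2 := by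
    have h1 : Filter.Tendsto (fun μ => |∫ y, xdV V ((lf μ)⁻¹ • y) * ‖Q y‖ ^ 2|)
        (𝓝[>] (0:ℝ)) (𝓝 |0|) := hJK.abs
    rw [abs_zero] at h1
    refine h1.eventually_le_const ?_
    have h6 : (0:ℝ) < 6 * GQ * κ * MQ ^ 2 :=
      mul_pos (mul_pos (mul_pos (by norm_num) hGQ) hκ0) (pow_pos hMQ 2)
    exact h6
  have ec4 : ∀ᶠ μ in 𝓝[>] (0:ℝ),
      (∫ y, W2 ((lf μ)⁻¹ • y) * ‖Q y‖ ^ 2) ≤ -(18 / 5) * v0 * MQ := by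
    apply hJP.eventually_le_const
    have he : 2 * V 0 * (2 * MQ) = -(4 * v0 * MQ) := by rw [hv0def]; ring
    rw [he]
    have h1 : 0 < v0 * MQ := mul_pos hv0 hMQ
    linarith only [h1]
  have hall := ec1.and (ec2.and (ec3.and ec4))
  rw [Filter.eventually_iff] at hall
  rw [mem_nhdsGT_iff_exists_Ioc_subset] at hall
  obtain ⟨u, hu, hsub⟩ := hall
  refine ⟨v0 / 2, half_pos hv0, by linarith only [hv0], u, hu, ?_⟩
  intro μ hμ
  obtain ⟨hδ1, hμMG, hJKb, hJPb⟩ := hsub hμ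
  have hμ0 : 0 < μ := hμ.1
  -- abbreviations for this μ
  set δ := δf μ with hδdef
  set l := lf μ with hldef
  set s := Real.sqrt (1 + δ) with hsdef
  set a := s * l with hadef
  clear_value δ l s a
  have hδval : δ = κ * μ ^ 2 := by rw [hδdef, hδfdef]
  have hδ0 : 0 ≤ δ := by
    rw [hδval]
    exact mul_nonneg hκ0.le (sq_nonneg μ)
  have h1δ : (0:ℝ) < 1 + δ := by linarith only [hδ0]
  have hlval : l = (1 + δ) ^ 2 * MQ / μ := by
    rw [hldef, hlfdef]
    simp only [← hδdef]
  have hl0 : 0 < l := by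
    rw [hlval]
    exact div_pos (mul_pos (pow_pos h1δ 2) hMQ) hμ0
  have hs2 : s ^ 2 = 1 + δ := by
    rw [hsdef]
    exact Real.sq_sqrt (by linarith only [hδ0])
  have hs0 : 0 < s := by
    rw [hsdef]
    exact Real.sqrt_pos.2 (by linarith only [hδ0])
  have ha0 : 0 < a := by rw [hadef]; exact mul_pos hs0 hl0
  have hlinv : l⁻¹ = μ / ((1 + δ) ^ 2 * MQ) := by
    rw [hlval, inv_div]
  have hl_lb : MQ / μ ≤ l := by
    rw [hlval]
    have h1 : 0 ≤ ((1 + δ) ^ 2 - 1) * MQ / μ := by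
      apply div_nonneg _ hμ0.le
      apply mul_nonneg _ hMQ.le
      have hq := mul_nonneg hδ0 hδ0
      linarith only [hδ0, hq]
    have h2 : (1 + δ) ^ 2 * MQ / μ - MQ / μ = ((1 + δ) ^ 2 - 1) * MQ / μ := by ring
    linarith only [h1, h2]
  -- coefficient identities
  have ha2 : a ^ 2 = (1 + δ) * l ^ 2 := by rw [hadef, mul_pow, hs2]
  have ha4 : a ^ 4 = (1 + δ) ^ 2 * l ^ 4 := by
    have h : a ^ 4 = (a ^ 2) ^ 2 := by ring
    rw [h, ha2]; ring
  have hc2 : ∀ c : ℝ, a ^ 2 * ((l ^ 3)⁻¹ * c) = (1 + δ) * l⁻¹ * c := by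
    intro c
    rw [ha2]
    field_simp [hl0.ne']
  have hc4 : ∀ c : ℝ, a ^ 4 * ((l ^ 3)⁻¹ * c) = (1 + δ) ^ 2 * l * c := by
    intro c
    rw [ha4]
    field_simp [hl0.ne']
  have hcg : ∀ c : ℝ, (a * l) ^ 2 * ((l ^ 3)⁻¹ * c) = (1 + δ) * l * c := by
    intro c
    have h : (a * l) ^ 2 = a ^ 2 * l ^ 2 := by ring
    rw [h, ha2]
    field_simp [hl0.ne']
  -- functional values
  have hMφ : Mfun (fun x : R3 => ((a * Q (l • x) : ℝ) : ℂ)) = μ / (1 + δ) := by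
    rw [Mfun_phi Q a l ha0.le hl0.le, hIQ2, hc2, hlinv]
    field_simp
  have hGφ : Gfun (fun x : R3 => ((a * Q (l • x) : ℝ) : ℂ)) = (1 + δ) ^ 2 * l * GQ := by
    rw [Gfun_phi Q a l ha0.le hl0.le, hIQ4, hc4]
    ring
  have hH0φ : H0 (fun x : R3 => ((a * Q (l • x) : ℝ) : ℂ)) = (1 + δ) * l * ((3 / 2) * GQ) := by
    rw [H0_phi Q hQ a l ha0.le hl0.le, hIQg, hcg]
    ring
  -- provide the competitor
  refine ⟨fun x : R3 => ((a * Q (l • x) : ℝ) : ℂ), ?_, ?_, ?_, ?_, ?_, ?_, ?_, ?_⟩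
  · exact fun x => (fderiv_scaled Q hQ a l x).differentiableAt
  · have h : (fun x : R3 => ‖((a * Q (l • x) : ℝ) : ℂ)‖ ^ 2)
        = fun x => a ^ 2 * ‖Q (l • x)‖ ^ 2 := funext (norm_phi Q a l ha0.le 2)
    rw [h]
    exact (hQ2.comp_smul hl0.ne').const_mul _
  · have h : (fun x : R3 => ‖fderiv ℝ (fun x : R3 => ((a * Q (l • x) : ℝ) : ℂ)) x‖ ^ 2)
        = fun x => (a * l) ^ 2 * ‖fderiv ℝ Q (l • x)‖ ^ 2 :=
      funext (norm_fderiv_phi Q hQ a l ha0.le hl0.le)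
    rw [h]
    exact (hQg.comp_smul hl0.ne').const_mul _
  · have h : (fun x : R3 => ‖((a * Q (l • x) : ℝ) : ℂ)‖ ^ 4)
        = fun x => a ^ 4 * ‖Q (l • x)‖ ^ 4 := funext (norm_phi Q a l ha0.le 4)
    rw [h]
    exact (hQ4.comp_smul hl0.ne').const_mul _
  · -- mass
    rw [hMφ]
    exact div_le_self hμ0.le (by linarith only [hδ0])
  · -- virial
    rw [K2_phi V Q hQ a l ha0.le hl0, hH0φ, hGφ, hc2]
    set JK := ∫ y, xdV V (l⁻¹ • y) * ‖Q y‖ ^ 2 with hJKd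
    have hJKabs : |JK| ≤ 6 * GQ * κ * MQ ^ 2 := hJKb
    have hsq : (MQ / μ) ^ 2 ≤ l ^ 2 :=
      pow_le_pow_left₀ (div_nonneg hMQ.le hμ0.le) hl_lb 2
    have hl2δ : κ * MQ ^ 2 ≤ l ^ 2 * δ := by
      have heq : (MQ / μ) ^ 2 * (κ * μ ^ 2) = κ * MQ ^ 2 := by
        field_simp
        try ring
        try exact Or.inl trivial
      calc κ * MQ ^ 2 = (MQ / μ) ^ 2 * (κ * μ ^ 2) := heq.symm
        _ ≤ l ^ 2 * (κ * μ ^ 2) :=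
            mul_le_mul_of_nonneg_right hsq (mul_nonneg hκ0.le (sq_nonneg μ))
        _ = l ^ 2 * δ := by rw [hδval]
    have hlinv0 : (0:ℝ) ≤ l⁻¹ := inv_nonneg.2 hl0.le
    have hkey : (1 / 2) * ((1 + δ) * l⁻¹ * |JK|) ≤ 3 * (1 + δ) * l * GQ * δ := by
      have hcoef : (0:ℝ) ≤ (1 + δ) * l⁻¹ := mul_nonneg h1δ.le hlinv0
      have hstep1 : (1 + δ) * l⁻¹ * |JK| ≤ (1 + δ) * l⁻¹ * (6 * GQ * κ * MQ ^ 2) :=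
        mul_le_mul_of_nonneg_left hJKabs hcoef
      have hmid : 6 * GQ * (κ * MQ ^ 2) ≤ 6 * GQ * (l ^ 2 * δ) :=
        mul_le_mul_of_nonneg_left hl2δ (by linarith only [hGQ])
      have hstep2 : (1 + δ) * l⁻¹ * (6 * GQ * (κ * MQ ^ 2))
          ≤ (1 + δ) * l⁻¹ * (6 * GQ * (l ^ 2 * δ)) :=
        mul_le_mul_of_nonneg_left hmid hcoef
      have hstep3 : (1 / 2) * ((1 + δ) * l⁻¹ * (6 * GQ * (l ^ 2 * δ)))
          = 3 * (1 + δ) * l * GQ * δ := by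
        field_simp [hl0.ne']
        ring
      linarith only [hstep1, hstep2, hstep3]
    have hneg : -((1 / 2) * ((1 + δ) * l⁻¹ * JK))
        ≤ (1 / 2) * ((1 + δ) * l⁻¹ * |JK|) := by
      have h1 : -JK ≤ |JK| := neg_le_abs JK
      have h2 : (0:ℝ) ≤ (1 / 2) * ((1 + δ) * l⁻¹) := by
        have hq := mul_nonneg h1δ.le hlinv0
        linarith only [hq]
      calc -((1 / 2) * ((1 + δ) * l⁻¹ * JK)) = (1 / 2) * ((1 + δ) * l⁻¹) * (-JK) := by ring
        _ ≤ (1 / 2) * ((1 + δ) * l⁻¹) * |JK| := mul_le_mul_of_nonneg_left h1 h2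
        _ = (1 / 2) * ((1 + δ) * l⁻¹ * |JK|) := by ring
    have hmain : 2 * ((1 + δ) * l * ((3 / 2) * GQ)) - 3 * ((1 + δ) ^ 2 * l * GQ)
        = -(3 * (1 + δ) * l * GQ * δ) := by ring
    linarith only [hkey, hneg, hmain]
  · -- G ≥ 1
    rw [hGφ]
    have h1 : MQ * GQ / μ ≤ l * GQ := by
      have he : MQ * GQ / μ = (MQ / μ) * GQ := by ring
      rw [he]
      exact mul_le_mul_of_nonneg_right hl_lb hGQ.le
    have h2 : (1:ℝ) ≤ MQ * GQ / μ := (one_le_div hμ0).2 hμMG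
    have h3 : 1 * (l * GQ) ≤ (1 + δ) ^ 2 * (l * GQ) := by
      apply mul_le_mul_of_nonneg_right _ (mul_pos hl0 hGQ).le
      have hq := mul_nonneg hδ0 hδ0
      linarith only [hδ0, hq]
    linarith only [h1, h2, h3]
  · -- the IV bound
    rw [IV_phi V Q a l ha0.le hl0, hGφ, hc2]
    set JP := ∫ y, (xdV V (l⁻¹ • y) + 2 * V (l⁻¹ • y)) * ‖Q y‖ ^ 2 with hJPd
    have hJPle : JP ≤ -(18 / 5) * v0 * MQ := by
      have : (∫ y, W2 (l⁻¹ • y) * ‖Q y‖ ^ 2) = JP := by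
        rw [hJPd]
        simp only [hW2def]
      rw [← this]
      exact hJPb
    -- second term
    have ht2 : (1 / 4) * ((1 + δ) * l⁻¹ * JP) ≤ -(3 / 4) * v0 * μ := by
      rw [hlinv]
      have heq : (1 / 4) * ((1 + δ) * (μ / ((1 + δ) ^ 2 * MQ)) * JP)
          = ((1 + δ) * μ * JP) / (4 * (1 + δ) ^ 2 * MQ) := by
        field_simp
        try ring
        try exact Or.inl trivial
      rw [heq, div_le_iff₀
        (mul_pos (mul_pos (by norm_num) (pow_pos h1δ 2)) hMQ)]
      have hAm : (0:ℝ) ≤ (1 + δ) * μ := mul_nonneg h1δ.le hμ0.le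
      have h1 : (1 + δ) * μ * JP ≤ (1 + δ) * μ * (-(18 / 5) * v0 * MQ) := by
        calc (1 + δ) * μ * JP = ((1 + δ) * μ) * JP := by ring
          _ ≤ ((1 + δ) * μ) * (-(18 / 5) * v0 * MQ) := mul_le_mul_of_nonneg_left hJPle hAm
          _ = (1 + δ) * μ * (-(18 / 5) * v0 * MQ) := by ring
      have h2 : (0:ℝ) ≤ v0 * μ * MQ * (1 + δ) * (18 / 5 - 3 * (1 + δ)) := by
        apply mul_nonneg
        apply mul_nonneg
        apply mul_nonneg
        apply mul_nonneg hv0.le hμ0.le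
        exact hMQ.le
        · linarith
        · linarith
      linarith only [h1, h2]
    -- first term
    have ht1 : (1 / 2) * ((1 + δ) ^ 2 * l * GQ)
        ≤ μ⁻¹ * ((1 / 2) * GQ * MQ) + (3 / 40) * v0 * μ := by
      rw [hlval]
      have heq : (1 / 2) * ((1 + δ) ^ 2 * ((1 + δ) ^ 2 * MQ / μ) * GQ)
          = ((1 + δ) ^ 4 * MQ * GQ) / (2 * μ) := by
        field_simp
        try ring
        try exact Or.inl trivial
      rw [heq, div_le_iff₀ (by linarith : (0:ℝ) < 2 * μ)]
      have hR : (μ⁻¹ * ((1 / 2) * GQ * MQ) + (3 / 40) * v0 * μ) * (2 * μ)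
          = GQ * MQ + (3 / 20) * v0 * μ ^ 2 := by
        field_simp
        try ring
        try exact Or.inl trivial
      rw [hR]
      have hd2 : δ ^ 2 ≤ (1 / 5) * δ := by
        have h := mul_le_mul_of_nonneg_left hδ1 hδ0
        linarith only [h]
      have hd3 : δ ^ 3 ≤ (1 / 25) * δ := by
        have h := mul_le_mul_of_nonneg_right hd2 hδ0
        linarith only [h, hd2]
      have hd4 : δ ^ 4 ≤ (1 / 125) * δ := by
        have h := mul_le_mul_of_nonneg_right hd3 hδ0
        linarith only [h, hd2]
      have h15 : (1 + δ) ^ 4 ≤ 1 + 15 * δ := by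
        linarith only [hδ0, hd2, hd3, hd4]
      have h16 : (1 + δ) ^ 4 * (MQ * GQ) ≤ (1 + 15 * δ) * (MQ * GQ) :=
        mul_le_mul_of_nonneg_right h15 (mul_pos hMQ hGQ).le
      have h17 : 15 * δ * (MQ * GQ) = (3 / 20) * v0 * μ ^ 2 := by
        rw [hδval, ← hκval]
        ring
      linarith only [h16, h17]
    have hE0M : E0 Q * MQ = (1 / 2) * GQ * MQ := by rw [hE0Q]
    have hvμ : 0 < v0 * μ := mul_pos hv0 hμ0
    calc (1 / 2) * ((1 + δ) ^ 2 * l * GQ) + (1 / 4) * ((1 + δ) * l⁻¹ * JP)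
        ≤ (μ⁻¹ * ((1 / 2) * GQ * MQ) + (3 / 40) * v0 * μ) + (-(3 / 4) * v0 * μ) := by
          linarith only [ht1, ht2]
      _ ≤ μ⁻¹ * (E0 Q * MQ) - v0 / 2 * μ := by
          rw [hE0M]
          linarith only [hvμ]

end
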